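/- Let (M, J) be a 2n-dimensional compact complex non-Kähler manifold with vanishing first Chern class c₁(M, J) = 0, with n ≥ 3, satisfying the ∂∂̄-lemma, and suppose there exists a hermitian metric g compatible with J whose Lee form θ has dθ of type (1,1). Then there exists a conformally equivalent hermitian metric ḡ = e^f g, unique up to homothety, such that the restricted holonomy of the Bismut connection of (M, ḡ, J) is contained in SU(n) (equivalently, its Bismut Ricci form vanishes). -/

import Mathlib

/-!
# Statement 17: Bismut connections with restricted holonomy in SU(n)

Let (M, J) be a 2n-dimensional compact complex non-Kähler manifold with c₁(M, J) = 0,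
n ≥ 3, satisfying the ∂∂̄-lemma, and let g be a hermitian metric whose Lee form
θ = (d†Ω)∘J has dθ of type (1,1).  Then there is a conformally equivalent hermitian
metric ḡ = e^f g, unique up to homothety, whose Bismut connection has restricted holonomy
contained in SU(n), equivalently whose Bismut Ricci form vanishes.

The hermitian geometry of the fixed compact complex manifold (M, J) is axiomatized in
`HermitianGeometryB`: hermitian metrics, real 2-forms, f ↦ i∂∂̄f, conformal rescaling,
the Bismut Ricci form ρᵇ (which represents 2πc₁(M, J), has (2,0)-part equal to the
(2,0)-part of dθ, and transforms under g̃ = e^f g by iρ̃ᵇ_{β̄α} = iρᵇ_{β̄α} + (2−n)∂_{β̄}∂_αf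
with unchanged (2,0)-part), and the characterization of restricted Bismut holonomy in
SU(n) by the vanishing of ρᵇ.  The ∂∂̄-lemma is an explicit hypothesis of the theorem.
-/

/-- Abstract presentation of the hermitian geometry (with Bismut connections) of a fixed
compact connected complex manifold (M, J) of complex dimension n. -/
structure HermitianGeometryB where
  /-- the points of the complex manifold (M, J) -/
  M : Type
  instTop : TopologicalSpace M
  /-- M is compact -/
  instCompact : CompactSpace M
  /-- the complex dimension n of M -/
  n : ℕ
  /-- hermitian metrics on M compatible with J -/
  Metric : Type
  metric_nonempty : Nonempty Metric
  /-- smooth real 2-forms on M -/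
  Form2 : Type
  instAdd : AddCommGroup Form2
  instMod : Module ℝ Form2
  /-- the operator f ↦ i∂∂̄f on smooth real functions -/
  ddbar : (M → ℝ) →ₗ[ℝ] Form2
  /-- ω is d-exact -/
  IsExact : Form2 → Prop
  /-- ω is of type (1,1) with respect to J -/
  IsType11 : Form2 → Prop
  /-- i∂∂̄f is an exact (1,1)-form -/
  ddbar_exact : ∀ f, IsExact (ddbar f)
  ddbar_type11 : ∀ f, IsType11 (ddbar f)
  /-- on the compact M, the equation g^{β̄α}∂_{β̄}∂_α f = 0 has only constant solutions;
  in particular i∂∂̄f = 0 forces f to be constant -/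
  ddbar_ker_const : ∀ f : M → ℝ, ddbar f = 0 → ∃ c : ℝ, f = fun _ => c
  /-- conformal rescaling: (g, f) ↦ e^f g -/
  conformal : Metric → (M → ℝ) → Metric
  /-- the Ricci form ρᵇ of the Bismut connection of g (the unique hermitian connection
  with totally skew-symmetric torsion) -/
  bismutRicci : Metric → Form2
  /-- ρᵇ represents 2π c₁(M, J); `c1Zero` says the first Chern class vanishes -/
  c1Zero : Prop
  c1Zero_iff_bismut_exact : ∀ g, c1Zero ↔ IsExact (bismutRicci g)
  /-- the (2,0)+(0,2) component of dθ_g, where θ_g = (d†Ω_g)∘J is the Lee form of g;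
  since iρᵇ_{βα} = (dθ)_{βα}, the Bismut Ricci form is of type (1,1) iff this vanishes -/
  dLee20 : Metric → Form2
  /-- iρᵇ_{βα} = (dθ)_{βα}: if dθ is of type (1,1) then so is ρᵇ -/
  bismut_type11_of_dLee : ∀ g, dLee20 g = 0 → IsType11 (bismutRicci g)
  /-- conformal transformation of the Bismut Ricci form when ρᵇ(g) is of type (1,1):
  iρ̃ᵇ_{β̄α} = iρᵇ_{β̄α} + (2−n)∂_{β̄}∂_α f with unchanged (vanishing) (2,0)-part, i.e.
  ρᵇ(e^f g) = ρᵇ(g) + (2−n)·i∂∂̄f -/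
  bismut_conformal : ∀ g f, IsType11 (bismutRicci g) →
    bismutRicci (conformal g f) = bismutRicci g + ((2 : ℝ) - n) • ddbar f
  /-- the restricted holonomy of the Bismut connection of g is contained in SU(n) -/
  BismutHolSU : Metric → Prop
  /-- restricted Bismut holonomy lies in SU(n) iff the Bismut Ricci form vanishes -/
  bismutHolSU_iff : ∀ g, BismutHolSU g ↔ bismutRicci g = 0
  /-- g is a Kähler metric (dΩ_g = 0) -/
  IsKahler : Metric → Prop

attribute [instance] HermitianGeometryB.instTop HermitianGeometryB.instCompact
  HermitianGeometryB.instAdd HermitianGeometryB.instMod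

/-- Let (M, J) be a 2n-dimensional compact complex non-Kähler manifold
with c₁(M, J) = 0 and n ≥ 3, satisfying the ∂∂̄-lemma, and let g be a hermitian metric
compatible with J whose Lee form θ has dθ of type (1,1).  Then there is a conformal
factor f such that the Bismut connection of ḡ = e^f g has restricted holonomy contained
in SU(n) (equivalently, vanishing Bismut Ricci form), and ḡ is unique up to homothety
among the conformal rescalings of g with this property: any other factor differs from f
by a constant. -/
theorem bismut_holonomy_su_of_dLee_type11 (s : HermitianGeometryB) (hn : 3 ≤ s.n)
    (hnonKahler : ∀ g, ¬ s.IsKahler g)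
    (hc1 : s.c1Zero)
    (hddbarLemma : ∀ ω, s.IsExact ω → s.IsType11 ω → ∃ f, ω = s.ddbar f)
    (g : s.Metric) (hdθ : s.dLee20 g = 0) :
    ∃ f : s.M → ℝ, s.BismutHolSU (s.conformal g f) ∧
      ∀ f' : s.M → ℝ, s.BismutHolSU (s.conformal g f') →
        ∃ c : ℝ, f' = fun p => f p + c := by
  have htype : s.IsType11 (s.bismutRicci g) := s.bismut_type11_of_dLee g hdθ
  have hexact : s.IsExact (s.bismutRicci g) := (s.c1Zero_iff_bismut_exact g).mp hc1
  obtain ⟨h, hh⟩ := hddbarLemma _ hexact htype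
  have hne : ((2 : ℝ) - s.n) ≠ 0 := by
    have : (3 : ℝ) ≤ (s.n : ℝ) := by exact_mod_cast hn
    intro h0; linarith
  set f : s.M → ℝ := fun p => (-(((2:ℝ) - s.n)⁻¹)) • h p with hf
  have key : ∀ f' : s.M → ℝ, s.bismutRicci (s.conformal g f') =
      s.ddbar (fun p => h p + ((2:ℝ) - s.n) * f' p) := by
    intro f'
    rw [s.bismut_conformal g f' htype, hh]
    have : (fun p => h p + ((2:ℝ) - s.n) * f' p) = h + ((2:ℝ) - s.n) • f' := rfl
    rw [this, map_add, map_smul]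
  refine ⟨f, ?_, ?_⟩
  · rw [s.bismutHolSU_iff, key]
    have : (fun p => h p + ((2:ℝ) - s.n) * f p) = (0 : s.M → ℝ) := by
      funext p
      show h p + (2 - (s.n:ℝ)) * (-(2 - (s.n:ℝ))⁻¹ * h p) = 0
      field_simp
      ring
    rw [this, map_zero]
  · intro f' hf'
    rw [s.bismutHolSU_iff, key] at hf'
    obtain ⟨c, hc⟩ := s.ddbar_ker_const _ hf'
    refine ⟨(((2:ℝ) - s.n)⁻¹) * c, ?_⟩
    funext p
    have := congrFun hc p
    have hfp : f p = (-(((2:ℝ) - s.n)⁻¹)) * h p := rfl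
    rw [hfp]
    have h2 : f' p = (2 - (s.n:ℝ))⁻¹ * (c - h p) := by
      field_simp
      ring
      linarith [this]
    rw [h2]
    field_simp
    ring
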